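/- Let t be the irrational with continued fraction partial quotients a_i equal to a tower of i twos with an i on top, and convergent denominators d_i. Then for all i ≥ 3, a_{i+1} > 16^{d_i²}, and consequently |t - c_i/d_i| < 1/(2π d_i² (d_i+1)² φ^{d_i² + 2 d_i}), where φ = (1+√5)/2. -/

import Mathlib

noncomputable def phi : ℝ := (1 + Real.sqrt 5) / 2

/-- The Gauss map `x ↦ {1/x}`. -/
noncomputable def gaussMap (x : ℝ) : ℝ := Int.fract (1 / x)

/-- The `k`-th partial quotient `a_k(t)` (for `k ≥ 1`) of the regular continued
fraction of an irrational `t ∈ (0,1)`. -/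
noncomputable def cfPQ (t : ℝ) (k : ℕ) : ℤ := ⌊1 / gaussMap^[k - 1] t⌋

noncomputable def cfDenAux (t : ℝ) : ℕ → ℤ × ℤ
  | 0 => (1, cfPQ t 1)
  | n + 1 => ((cfDenAux t n).2, cfPQ t (n + 2) * (cfDenAux t n).2 + (cfDenAux t n).1)

/-- The denominator `d_n(t)` of the `n`-th convergent. -/
noncomputable def cfDen (t : ℝ) (n : ℕ) : ℤ := (cfDenAux t n).1

noncomputable def cfNumAux (t : ℝ) : ℕ → ℤ × ℤ
  | 0 => (0, 1)
  | n + 1 => ((cfNumAux t n).2, cfPQ t (n + 2) * (cfNumAux t n).2 + (cfNumAux t n).1)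

/-- The numerator `c_n(t)` of the `n`-th convergent. -/
noncomputable def cfNum (t : ℝ) (n : ℕ) : ℤ := (cfNumAux t n).1

/-- `tw k m` is a tower of `k` twos with `m` on top. -/
def tw : ℕ → ℕ → ℕ
  | 0, m => m
  | k + 1, m => 2 ^ tw k m


def dn : ℕ → ℕ
  | 0 => 1
  | 1 => 2
  | n + 2 => tw (n + 2) (n + 2) * dn (n + 1) + dn n

lemma le_tw (k m : ℕ) : m ≤ tw k m := by
  induction k with
  | zero => simp [tw]
  | succ k ih => exact le_trans ih (le_trans (Nat.le_of_lt Nat.lt_two_pow_self) (le_refl _))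

lemma tw_lt_tw (k : ℕ) {m m' : ℕ} (h : m < m') : tw k m < tw k m' := by
  induction k with
  | zero => simpa [tw]
  | succ k ih => exact Nat.pow_lt_pow_right one_lt_two ih

lemma tw_sq {k : ℕ} (hk : 2 ≤ k) (m : ℕ) : tw k m ^ 2 ≤ tw k (m + 1) := by
  obtain ⟨j, rfl⟩ : ∃ j, k = j + 2 := ⟨k - 2, by omega⟩
  have h1 : tw j m + 1 ≤ tw j (m + 1) := tw_lt_tw j (Nat.lt_succ_self m)
  have h2 : 2 * 2 ^ tw j m ≤ 2 ^ tw j (m + 1) := by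
    calc 2 * 2 ^ tw j m = 2 ^ (tw j m + 1) := by ring
    _ ≤ 2 ^ tw j (m + 1) := Nat.pow_le_pow_right (by norm_num) h1
  show (2 ^ (2 ^ tw j m)) ^ 2 ≤ 2 ^ (2 ^ tw j (m+1))
  rw [← pow_mul]
  exact Nat.pow_le_pow_right (by norm_num) (by
    calc 2 ^ tw j m * 2 = 2 * 2 ^ tw j m := by ring
    _ ≤ 2 ^ tw j (m+1) := h2)

lemma one_le_tw (k m : ℕ) (hm : 1 ≤ m) : 1 ≤ tw k m := le_trans hm (le_tw k m)

lemma one_le_dn (n : ℕ) : 1 ≤ dn n := by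
  induction n using Nat.strong_induction_on with
  | _ n ih =>
    match n with
    | 0 => simp [dn]
    | 1 => simp [dn]
    | n + 2 =>
      have := ih n (by omega)
      have h1 := one_le_tw (n+2) (n+2) (by omega)
      simp only [dn]
      nlinarith

lemma dn_mono (n : ℕ) : dn n ≤ dn (n + 1) := by
  match n with
  | 0 => simp [dn]
  | n + 1 =>
    have h1 := one_le_tw (n+2) (n+2) (by omega)
    have h2 := one_le_dn (n+1)
    have h3 := one_le_dn n
    show dn (n+1) ≤ tw (n+2) (n+2) * dn (n+1) + dn n
    nlinarith

lemma two_le_dn (n : ℕ) (hn : 1 ≤ n) : 2 ≤ dn n := by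
  induction n with
  | zero => omega
  | succ n ih =>
    rcases Nat.eq_or_lt_of_le hn with h | h
    · simp [← h, dn]
    · exact le_trans (ih (by omega)) (dn_mono n)

lemma dn_bound : ∀ i : ℕ, 3 ≤ i → 4 * dn i ^ 2 < tw i (i + 1) := by
  intro i hi
  induction i, hi using Nat.le_induction with
  | base =>
    have hd3 : dn 3 ≤ 2 ^ 262 := by
      show tw 3 3 * dn 2 + dn 1 ≤ 2 ^ 262
      show tw 3 3 * (tw 2 2 * dn 1 + dn 0) + dn 1 ≤ 2 ^ 262
      simp only [dn, tw]
      norm_num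
      decide
    calc 4 * dn 3 ^ 2 ≤ 4 * (2 ^ 262) ^ 2 := Nat.mul_le_mul_left 4 (Nat.pow_le_pow_left hd3 2)
    _ = 2 ^ 526 := by rw [← pow_mul, show (4:ℕ) = 2^2 by rfl, ← pow_add]
    _ < 2 ^ (2 ^ (2 ^ 4)) := by
        have e : (2:ℕ) ^ (2 ^ 4) = 65536 := by norm_num
        rw [e]
        exact Nat.pow_lt_pow_right one_lt_two (by norm_num)
    _ = tw 3 4 := rfl
  | succ i hi ih =>
    obtain ⟨n, rfl⟩ : ∃ n, i = n + 2 := ⟨i - 2, by omega⟩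
    have ihh := ih
    set T := tw (n + 2) (n + 3) with hT
    have hT4 : 4 ≤ T := le_trans (by omega) (le_tw (n+2) (n+3))
    have hdd : dn (n + 1) ≤ dn (n + 2) := dn_mono (n + 1)
    have hstep : dn (n + 3) ≤ 2 * 2 ^ T * dn (n + 2) := by
      show tw (n+3) (n+3) * dn (n+2) + dn (n+1) ≤ 2 * 2 ^ T * dn (n+2)
      have : tw (n+3) (n+3) = 2 ^ T := rfl
      rw [this]
      have h1 : 1 ≤ dn (n+2) := one_le_dn _
      have h2 : 1 ≤ 2 ^ T := Nat.one_le_two_pow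
      nlinarith
    have key : 4 * dn (n + 3) ^ 2 < 2 ^ (T ^ 2) := by
      have h1 : 4 * dn (n+3) ^ 2 ≤ 4 * 2 ^ (2 * T) * (4 * dn (n+2) ^ 2) := by
        have : (2 * 2 ^ T * dn (n+2)) ^ 2 = 4 * 2 ^ (2*T) * dn (n+2)^2 := by
          rw [show (2:ℕ)*T = T + T from two_mul T, pow_add]; ring
        nlinarith [pow_le_pow_left₀ (Nat.zero_le _) hstep 2]
      have h2 : 4 * 2 ^ (2 * T) * (4 * dn (n+2) ^ 2) < 4 * 2 ^ (2*T) * T := by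
        exact mul_lt_mul_of_pos_left ihh (by positivity)
      have h3 : 4 * 2 ^ (2 * T) * T < 2 ^ (3 * T + 2) := by
        have hT2 : T < 2 ^ T := Nat.lt_two_pow_self
        calc 4 * 2 ^ (2*T) * T < 4 * 2 ^ (2*T) * 2 ^ T := by
              exact mul_lt_mul_of_pos_left hT2 (by positivity)
        _ = 2 ^ (3*T+2) := by
              rw [show (3:ℕ)*T+2 = (2*T) + (T + 2) from by ring, pow_add, pow_add]; ring
      have h4 : 3 * T + 2 ≤ T ^ 2 := by nlinarith
      calc 4 * dn (n+3)^2 ≤ 4 * 2 ^ (2*T) * (4 * dn (n+2)^2) := h1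
      _ < 2 ^ (3*T+2) := h2.trans h3
      _ ≤ 2 ^ (T^2) := Nat.pow_le_pow_right (by norm_num) h4
    calc 4 * dn (n+3) ^ 2 < 2 ^ (T ^ 2) := key
    _ ≤ 2 ^ tw (n+2) (n+4) := by
        apply Nat.pow_le_pow_right (by norm_num)
        have := tw_sq (k := n+2) (by omega) (n+3)
        simpa [hT] using this
    _ = tw (n + 3) (n + 4) := rfl


section CF

variable {t : ℝ} (ht : t ∈ Set.Ioo (0 : ℝ) 1) (hirr : Irrational t)

include ht hirr in
lemma iter_mem : ∀ k, Irrational (gaussMap^[k] t) ∧ gaussMap^[k] t ∈ Set.Ioo (0 : ℝ) 1 := by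
  intro k
  induction k with
  | zero => exact ⟨hirr, ht⟩
  | succ k ih =>
    obtain ⟨hi, h0, h1⟩ := ih
    rw [Function.iterate_succ_apply']
    set x := gaussMap^[k] t
    have hinv : Irrational (1 / x) := by
      simpa [one_div] using hi.inv
    have hfr : Irrational (Int.fract (1 / x)) := by
      unfold Int.fract
      exact hinv.sub_intCast _
    refine ⟨hfr, ?_, Int.fract_lt_one _⟩
    rcases lt_or_eq_of_le (Int.fract_nonneg (1 / x)) with h | h
    · exact h
    · exact absurd (h ▸ hfr) (by intro h'; exact (Rat.not_irrational 0) (by simpa using h'))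

include ht hirr in
lemma iter_eq (k : ℕ) :
    gaussMap^[k] t = 1 / ((cfPQ t (k + 1) : ℝ) + gaussMap^[k + 1] t) := by
  obtain ⟨hi, h0, h1⟩ := iter_mem ht hirr k
  have hx : gaussMap^[k] t ≠ 0 := ne_of_gt h0
  have e1 : cfPQ t (k + 1) = ⌊1 / gaussMap^[k] t⌋ := by simp [cfPQ]
  have e2 : gaussMap^[k + 1] t = Int.fract (1 / gaussMap^[k] t) := by
    rw [Function.iterate_succ_apply']; rfl
  rw [e1, e2, Int.fract]
  rw [show (⌊1 / gaussMap^[k] t⌋ : ℝ) + (1 / gaussMap^[k] t - ⌊1 / gaussMap^[k] t⌋)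
      = 1 / gaussMap^[k] t from by ring, one_div_one_div]


include ht hirr in
lemma cfPQ_one_le (k : ℕ) : 1 ≤ cfPQ t (k + 1) := by
  obtain ⟨hi, h0, h1⟩ := iter_mem ht hirr k
  simp only [cfPQ, Nat.add_sub_cancel]
  apply Int.le_floor.mpr
  push_cast
  rw [le_div_iff₀ h0]; linarith

include ht hirr in
lemma den_one_le (n : ℕ) : 1 ≤ (cfDenAux t n).1 ∧ 1 ≤ (cfDenAux t n).2 := by
  induction n with
  | zero => exact ⟨le_refl _, cfPQ_one_le ht hirr 0⟩
  | succ n ih =>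
    obtain ⟨h1, h2⟩ := ih
    refine ⟨h2, ?_⟩
    have := cfPQ_one_le ht hirr (n + 1)
    show 1 ≤ cfPQ t (n + 2) * (cfDenAux t n).2 + (cfDenAux t n).1
    nlinarith

include ht hirr in
lemma lin_frac : ∀ n : ℕ,
    t * (((cfDenAux t n).2 : ℝ) + ((cfDenAux t n).1 : ℝ) * gaussMap^[n + 1] t)
      = ((cfNumAux t n).2 : ℝ) + ((cfNumAux t n).1 : ℝ) * gaussMap^[n + 1] t := by
  intro n
  induction n with
  | zero =>
    have h := iter_eq ht hirr 0
    simp only [Function.iterate_zero_apply] at h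
    have hpos : (0:ℝ) < (cfPQ t 1 : ℝ) + gaussMap^[1] t := by
      have h1 := cfPQ_one_le ht hirr 0
      have h2 := (iter_mem ht hirr 1).2.1
      push_cast
      have : (1:ℝ) ≤ (cfPQ t 1 : ℝ) := by exact_mod_cast h1
      linarith
    show t * (((cfDenAux t 0).2 : ℝ) + ((cfDenAux t 0).1 : ℝ) * gaussMap^[0 + 1] t)
        = ((cfNumAux t 0).2 : ℝ) + ((cfNumAux t 0).1 : ℝ) * gaussMap^[0 + 1] t
    simp only [cfDenAux, cfNumAux]
    push_cast
    set A := (cfPQ t 1 : ℝ) with hA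
    set x := gaussMap^[1] t with hxx
    have hpos' : A + x ≠ 0 := ne_of_gt hpos
    rw [h]
    field_simp
    ring
  | succ n ih =>
    set x := gaussMap^[n + 1] t with hxdef
    set x' := gaussMap^[n + 2] t with hx'def
    have hx : x = 1 / ((cfPQ t (n + 2) : ℝ) + x') := iter_eq ht hirr (n + 1)
    have hpos : (0:ℝ) < (cfPQ t (n + 2) : ℝ) + x' := by
      have h1 := cfPQ_one_le ht hirr (n + 1)
      have h2 := (iter_mem ht hirr (n + 2)).2.1
      have : (1:ℝ) ≤ (cfPQ t (n + 2) : ℝ) := by exact_mod_cast h1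
      linarith
    have hx1 : x * ((cfPQ t (n + 2) : ℝ) + x') = 1 := by
      rw [hx]; field_simp
    show t * ((cfPQ t (n + 2) * (cfDenAux t n).2 + (cfDenAux t n).1 : ℤ) + ((cfDenAux t n).2 : ℝ) * x')
        = ((cfPQ t (n + 2) * (cfNumAux t n).2 + (cfNumAux t n).1 : ℤ) + ((cfNumAux t n).2 : ℝ) * x')
    push_cast
    linear_combination ((cfPQ t (n + 2) : ℝ) + x') * ih
      + (((cfNumAux t n).1 : ℝ) - t * ((cfDenAux t n).1 : ℝ)) * hx1

lemma det_eq (t : ℝ) : ∀ n : ℕ,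
    (cfNumAux t n).2 * (cfDenAux t n).1 - (cfNumAux t n).1 * (cfDenAux t n).2 = (-1) ^ n := by
  intro n
  induction n with
  | zero => simp [cfNumAux, cfDenAux]
  | succ n ih =>
    show (cfPQ t (n + 2) * (cfNumAux t n).2 + (cfNumAux t n).1) * (cfDenAux t n).2
        - (cfNumAux t n).2 * (cfPQ t (n + 2) * (cfDenAux t n).2 + (cfDenAux t n).1) = (-1) ^ (n + 1)
    rw [pow_succ]
    linear_combination (-1 : ℤ) * ih

include ht hirr in
lemma approx (n : ℕ) :
    |t - ((cfNumAux t n).2 : ℝ) / ((cfDenAux t n).2 : ℝ)| <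
      1 / (((cfDenAux t n).2 : ℝ) ^ 2 * (cfPQ t (n + 2) : ℝ)) := by
  set x := gaussMap^[n + 1] t with hxdef
  set x' := gaussMap^[n + 2] t with hx'def
  obtain ⟨_, hx0, hx1'⟩ := iter_mem ht hirr (n + 1)
  obtain ⟨_, hx'0, _⟩ := iter_mem ht hirr (n + 2)
  have hD1 : (1:ℝ) ≤ ((cfDenAux t n).1 : ℝ) := by exact_mod_cast (den_one_le ht hirr n).1
  have hD2 : (1:ℝ) ≤ ((cfDenAux t n).2 : ℝ) := by exact_mod_cast (den_one_le ht hirr n).2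
  have ha1 : (1:ℝ) ≤ (cfPQ t (n + 2) : ℝ) := by exact_mod_cast cfPQ_one_le ht hirr (n + 1)
  set D1 : ℝ := ((cfDenAux t n).1 : ℝ)
  set D2 : ℝ := ((cfDenAux t n).2 : ℝ)
  set C1 : ℝ := ((cfNumAux t n).1 : ℝ)
  set C2 : ℝ := ((cfNumAux t n).2 : ℝ)
  set a : ℝ := (cfPQ t (n + 2) : ℝ)
  have hden : (0:ℝ) < D2 + D1 * x := by nlinarith
  have hD2pos : (0:ℝ) < D2 := by linarith
  have lf : t * (D2 + D1 * x) = C2 + C1 * x := lin_frac ht hirr n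
  have hc : C2 / D2 * D2 = C2 := div_mul_cancel₀ _ (ne_of_gt hD2pos)
  have key : (t - C2 / D2) * (D2 * (D2 + D1 * x)) = x * (C1 * D2 - C2 * D1) := by
    linear_combination D2 * lf - (D2 + D1 * x) * hc
  have hdet : C1 * D2 - C2 * D1 = -(-1 : ℝ) ^ n := by
    have := det_eq t n
    have h3 := congrArg (fun z : ℤ => (z : ℝ)) this
    push_cast at h3
    linarith [h3]
  have habs : |t - C2 / D2| = x / (D2 * (D2 + D1 * x)) := by
    have hpos2 : (0:ℝ) < D2 * (D2 + D1 * x) := by positivity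
    rw [eq_div_iff (ne_of_gt hpos2)]
    calc |t - C2 / D2| * (D2 * (D2 + D1 * x))
        = |t - C2 / D2| * |D2 * (D2 + D1 * x)| := by rw [abs_of_pos hpos2]
    _ = |(t - C2 / D2) * (D2 * (D2 + D1 * x))| := (abs_mul _ _).symm
    _ = |x * (C1 * D2 - C2 * D1)| := by rw [key]
    _ = x := by
        rw [abs_mul, hdet, abs_neg, abs_pow, abs_neg, abs_one, one_pow, mul_one,
          abs_of_pos hx0]
  have hxa : x * a < 1 := by
    have hx : x = 1 / (a + x') := iter_eq ht hirr (n + 1)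
    have hpos : (0:ℝ) < a + x' := by linarith
    rw [hx]
    rw [div_mul_eq_mul_div, div_lt_one hpos]
    linarith
  rw [habs]
  calc x / (D2 * (D2 + D1 * x)) ≤ x / (D2 * D2) := by
        apply div_le_div_of_nonneg_left (le_of_lt hx0) (by positivity)
        nlinarith [mul_nonneg (mul_nonneg hD2pos.le (le_trans zero_le_one hD1)) hx0.le]
  _ < 1 / (D2 ^ 2 * a) := by
        rw [div_lt_div_iff₀ (by positivity) (by positivity)]
        nlinarith [mul_lt_mul_of_pos_right hxa (show (0:ℝ) < D2 ^ 2 by positivity)]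

end CF


section Main

variable {t : ℝ}

lemma cfDenAux_eq (ha : ∀ i : ℕ, 1 ≤ i → cfPQ t i = (tw i i : ℤ)) :
    ∀ n : ℕ, cfDenAux t n = ((dn n : ℤ), (dn (n + 1) : ℤ)) := by
  intro n
  induction n with
  | zero =>
    show ((1 : ℤ), cfPQ t 1) = ((dn 0 : ℤ), (dn 1 : ℤ))
    rw [ha 1 (by norm_num)]
    norm_num [dn, tw]
  | succ n ih =>
    show ((cfDenAux t n).2, cfPQ t (n + 2) * (cfDenAux t n).2 + (cfDenAux t n).1)
        = ((dn (n + 1) : ℤ), (dn (n + 2) : ℤ))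
    rw [ih, ha (n + 2) (by omega)]
    show ((dn (n+1) : ℤ), (tw (n+2) (n+2) : ℤ) * (dn (n+1) : ℤ) + (dn n : ℤ))
        = ((dn (n + 1) : ℤ), (dn (n + 2) : ℤ))
    have : dn (n + 2) = tw (n+2) (n+2) * dn (n+1) + dn n := rfl
    rw [this]
    push_cast
    rfl

lemma phi_pos : (0:ℝ) < phi := by
  unfold phi
  have := Real.sqrt_nonneg 5
  linarith

lemma phi_le_two : phi ≤ 2 := by
  unfold phi
  have h : Real.sqrt 5 < 3 := by
    nlinarith [Real.sq_sqrt (show (0:ℝ) ≤ 5 by norm_num), Real.sqrt_nonneg 5]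
  linarith

/-- For the irrational `t` whose partial quotients are towers of twos,
`a_{i+1} > 16^{d_i²}` and `|t - c_i/d_i| < 1/(2π d_i² (d_i+1)² φ^{d_i²+2d_i})`
for all `i ≥ 3`. -/
theorem stmt18 (t : ℝ) (ht : t ∈ Set.Ioo (0 : ℝ) 1) (hirr : Irrational t)
    (ha : ∀ i : ℕ, 1 ≤ i → cfPQ t i = (tw i i : ℤ)) :
    ∀ i : ℕ, 3 ≤ i →
      (16 : ℝ) ^ ((cfDen t i) ^ 2) < (cfPQ t (i + 1) : ℝ) ∧
      |t - (cfNum t i : ℝ) / (cfDen t i : ℝ)| <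
        1 / (2 * Real.pi * (cfDen t i : ℝ) ^ 2 * ((cfDen t i : ℝ) + 1) ^ 2 *
          phi ^ ((cfDen t i) ^ 2 + 2 * cfDen t i)) := by
  intro i hi
  obtain ⟨n, rfl⟩ : ∃ n, i = n + 1 := ⟨i - 1, by omega⟩
  set d : ℕ := dn (n + 1) with hd
  have hDen : cfDen t (n + 1) = (d : ℤ) := by
    show (cfDenAux t (n + 1)).1 = (d : ℤ)
    rw [cfDenAux_eq ha (n + 1)]
  have hDen' : cfDen t (n + 1) = (cfDenAux t n).2 := rfl
  have haq : cfPQ t (n + 2) = (tw (n + 2) (n + 2) : ℤ) := ha (n + 2) (by omega)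
  set T : ℕ := tw (n + 1) (n + 2) with hT
  have hTw : tw (n + 2) (n + 2) = 2 ^ T := rfl
  have hbound : 4 * d ^ 2 < T := dn_bound (n + 1) hi
  have hd2 : 2 ≤ d := two_le_dn (n + 1) (by omega)
  -- Part 1
  have part1 : (16 : ℝ) ^ ((cfDen t (n + 1)) ^ 2) < (cfPQ t (n + 2) : ℝ) := by
    rw [hDen, haq]
    have e1 : ((d : ℤ) ^ 2) = ((d ^ 2 : ℕ) : ℤ) := by push_cast; ring
    rw [e1, zpow_natCast]
    have e2 : (16 : ℝ) ^ (d ^ 2 : ℕ) = ((16 ^ (d ^ 2) : ℕ) : ℝ) := by push_cast; ring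
    rw [e2, hTw]
    have hnat : 16 ^ (d ^ 2) < 2 ^ T := by
      calc 16 ^ (d ^ 2) = 2 ^ (4 * d ^ 2) := by
            rw [show (16:ℕ) = 2 ^ 4 from by norm_num, ← pow_mul]
      _ < 2 ^ T := Nat.pow_lt_pow_right one_lt_two hbound
    exact_mod_cast hnat
  refine ⟨part1, ?_⟩
  -- Part 2
  have hap := approx ht hirr n
  have hNum : (cfNum t (n + 1) : ℝ) = ((cfNumAux t n).2 : ℝ) := rfl
  have hDenR : (cfDen t (n + 1) : ℝ) = ((cfDenAux t n).2 : ℝ) := rfl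
  rw [hNum, hDenR] at *
  -- rewrite the phi exponent to a natural power
  set E : ℕ := d ^ 2 + 2 * d with hE
  have eexp : (cfDen t (n + 1)) ^ 2 + 2 * cfDen t (n + 1) = (E : ℤ) := by
    rw [hDen, hE]; push_cast; ring
  rw [eexp, zpow_natCast]
  have hdR : ((cfDenAux t n).2 : ℝ) = (d : ℝ) := by exact_mod_cast congrArg (Int.cast : ℤ → ℝ) (hDen ▸ hDen'.symm)
  rw [hdR] at hap ⊢
  have hdpos : (0:ℝ) < (d : ℝ) := by positivity
  have hdRpos : (0:ℝ) < (d : ℝ) ^ 2 := by positivity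
  -- key comparison of denominators
  have hcomp : 2 * Real.pi * (d : ℝ) ^ 2 * ((d : ℝ) + 1) ^ 2 * phi ^ E
      < (d : ℝ) ^ 2 * (cfPQ t (n + 2) : ℝ) := by
    have hpi := Real.pi_lt_d2
    have hpi0 := Real.pi_pos
    have hphiE : phi ^ E ≤ (2:ℝ) ^ E := pow_le_pow_left₀ phi_pos.le phi_le_two E
    have hphiE0 : (0:ℝ) < phi ^ E := pow_pos phi_pos E
    have hd1 : ((d : ℝ) + 1) ^ 2 ≤ (2:ℝ) ^ (2 * d) := by
      have hn : d + 1 ≤ 2 ^ d := Nat.lt_two_pow_self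
      have hnR : (d : ℝ) + 1 ≤ (2:ℝ) ^ d := by exact_mod_cast hn
      calc ((d : ℝ) + 1) ^ 2 ≤ ((2:ℝ) ^ d) ^ 2 := by
            apply pow_le_pow_left₀ (by positivity) hnR
      _ = (2:ℝ) ^ (2 * d) := by rw [← pow_mul, mul_comm]
    have step1 : 2 * Real.pi * ((d : ℝ) + 1) ^ 2 * phi ^ E
        < 8 * ((2:ℝ) ^ (2 * d)) * (2:ℝ) ^ E := by
      have h1 : 2 * Real.pi * ((d : ℝ) + 1) ^ 2 * phi ^ E
          < 8 * ((d : ℝ) + 1) ^ 2 * phi ^ E := by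
        have hq : (0:ℝ) < ((d : ℝ) + 1) ^ 2 * phi ^ E := by positivity
        nlinarith
      have h2 : 8 * ((d : ℝ) + 1) ^ 2 * phi ^ E ≤ 8 * ((2:ℝ) ^ (2 * d)) * (2:ℝ) ^ E := by
        have := mul_le_mul hd1 hphiE hphiE0.le (by positivity)
        nlinarith
      linarith
    have step2 : 8 * ((2:ℝ) ^ (2 * d)) * (2:ℝ) ^ E ≤ (2:ℝ) ^ (4 * d ^ 2) := by
      have e3 : 8 * ((2:ℝ) ^ (2 * d)) * (2:ℝ) ^ E = (2:ℝ) ^ (2 * d + E + 3) := by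
        rw [pow_add, pow_add]; norm_num; ring
      rw [e3]
      apply pow_le_pow_right₀ (by norm_num)
      have : 2 ≤ d := hd2
      rw [hE]
      nlinarith
    have step3 : (2:ℝ) ^ (4 * d ^ 2) ≤ (cfPQ t (n + 2) : ℝ) := by
      rw [haq, hTw]
      have : (2:ℕ) ^ (4 * d ^ 2) ≤ 2 ^ T := Nat.pow_le_pow_right (by norm_num) hbound.le
      exact_mod_cast this
    have hfinal : 2 * Real.pi * ((d : ℝ) + 1) ^ 2 * phi ^ E < (cfPQ t (n + 2) : ℝ) := by
      linarith
    calc 2 * Real.pi * (d : ℝ) ^ 2 * ((d : ℝ) + 1) ^ 2 * phi ^ E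
        = (d : ℝ) ^ 2 * (2 * Real.pi * ((d : ℝ) + 1) ^ 2 * phi ^ E) := by ring
    _ < (d : ℝ) ^ 2 * (cfPQ t (n + 2) : ℝ) := by
        exact mul_lt_mul_of_pos_left hfinal hdRpos
  have hpos1 : (0:ℝ) < 2 * Real.pi * (d : ℝ) ^ 2 * ((d : ℝ) + 1) ^ 2 * phi ^ E := by
    have := Real.pi_pos
    have := pow_pos phi_pos E
    positivity
  calc |t - ((cfNumAux t n).2 : ℝ) / (d : ℝ)|
      < 1 / ((d : ℝ) ^ 2 * (cfPQ t (n + 2) : ℝ)) := hap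
  _ < 1 / (2 * Real.pi * (d : ℝ) ^ 2 * ((d : ℝ) + 1) ^ 2 * phi ^ E) :=
      one_div_lt_one_div_of_lt hpos1 hcomp

end Main
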